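/- Let f : S' → S be a spectral map of spectral spaces, and let p : S̃ → S be a surjective, spectral, generalizing map of spectral spaces. Let S̃' = S' ×_S S̃ = { (x, y) ∈ S' × S̃ : f(x) = p(y) } with the subspace topology of the product, and let f̃ : S̃' → S̃ be the second projection. If f̃ is a local homeomorphism, then f is a local homeomorphism. -/

import Mathlib

universe u v

/-- A spectral space: a quasicompact topological space with a basis of quasicompact open
subsets stable under finite intersection, in which every irreducible closed subset has a
unique generic point. -/
def IsSpectralSpace (X : Type u) [TopologicalSpace X] : Prop :=
  CompactSpace X ∧ T0Space X ∧ QuasiSober X ∧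
    ∃ B : Set (Set X), TopologicalSpace.IsTopologicalBasis B ∧
      (∀ U ∈ B, IsCompact U) ∧ ∀ U ∈ B, ∀ V ∈ B, U ∩ V ∈ B

/-- A subset is constructible if it lies in the Boolean algebra of subsets generated by the
quasicompact open subsets. -/
inductive IsConstructibleSet {X : Type u} [TopologicalSpace X] : Set X → Prop
  | qcOpen (U : Set X) : IsOpen U → IsCompact U → IsConstructibleSet U
  | compl (S : Set X) : IsConstructibleSet S → IsConstructibleSet Sᶜ
  | union (S T : Set X) : IsConstructibleSet S → IsConstructibleSet T →
      IsConstructibleSet (S ∪ T)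

/-- A subset is pro-constructible if it is an intersection of constructible subsets. -/
def IsProconstructible {X : Type u} [TopologicalSpace X] (S : Set X) : Prop :=
  ∃ 𝒮 : Set (Set X), (∀ T ∈ 𝒮, IsConstructibleSet T) ∧ S = ⋂₀ 𝒮

/-- A continuous map `f : X → Y` is generalizing if whenever `y ∈ Y` is a generalization of
`f x` (i.e. `f x` lies in the closure of `{y}`), there exists a generalization `x'` of `x`
(i.e. `x` lies in the closure of `{x'}`) with `f x' = y`. -/
def IsGeneralizing {X : Type u} {Y : Type v} [TopologicalSpace X] [TopologicalSpace Y]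
    (f : X → Y) : Prop :=
  ∀ x : X, ∀ y : Y, f x ∈ closure ({y} : Set Y) →
    ∃ x' : X, x ∈ closure ({x'} : Set X) ∧ f x' = y

open Set TopologicalSpace Topology Filter

section PatchAux

variable {X : Type*} [tX : TopologicalSpace X]

/-- If an open set contains a point, it contains every generalization of it. -/
lemma specializes_mem_open {X : Type*} [TopologicalSpace X] {V : Set X} (hV : IsOpen V)
    {a b : X} (hab : a ∈ closure ({b} : Set X)) (ha : a ∈ V) : b ∈ V := by
  obtain ⟨w, hw1, hw2⟩ := mem_closure_iff.mp hab V hV ha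
  rw [Set.mem_singleton_iff] at hw2
  exact hw2 ▸ hw1

/-- The generators of the patch (constructible) topology: quasicompact opens and their
complements. -/
def patchGens (X : Type*) [TopologicalSpace X] : Set (Set X) :=
  {U | IsOpen U ∧ IsCompact U} ∪ compl '' {U | IsOpen U ∧ IsCompact U}

/-- The patch (constructible) topology. -/
def patchTop (X : Type*) [TopologicalSpace X] : TopologicalSpace X :=
  .generateFrom (patchGens X)

lemma patch_isOpen {U : Set X} (h1 : IsOpen U) (h2 : IsCompact U) :
    IsOpen[patchTop X] U :=
  .basic _ (Or.inl ⟨h1, h2⟩)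

lemma patch_isClosed {U : Set X} (h1 : IsOpen U) (h2 : IsCompact U) :
    IsClosed[patchTop X] U := by
  have h : IsOpen[patchTop X] Uᶜ := .basic _ (Or.inr ⟨U, ⟨h1, h2⟩, rfl⟩)
  rw [← compl_compl U]
  exact (@isClosed_compl_iff X (patchTop X) Uᶜ).mpr h

lemma patch_nhds {a : X} :
    @nhds X (patchTop X) a = ⨅ s ∈ {s | a ∈ s ∧ s ∈ patchGens X}, 𝓟 s :=
  nhds_generateFrom

lemma patch_le (hX : IsSpectralSpace X) : patchTop X ≤ tX := by
  obtain ⟨-, -, -, B, hB, hBc, -⟩ := hX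
  rw [TopologicalSpace.le_def]
  intro U hU
  obtain ⟨S, hSB, rfl⟩ := hB.open_eq_sUnion hU
  exact @isOpen_sUnion X (patchTop X) S fun V hV =>
    patch_isOpen (hB.isOpen (hSB hV)) (hBc V (hSB hV))

lemma patch_compactSpace (hX : IsSpectralSpace X) : @CompactSpace X (patchTop X) := by
  obtain ⟨hcomp, -, hsober, B, hB, hBc, hBi⟩ := hX
  haveI := hcomp
  refine @CompactSpace.mk X (patchTop X) ?_
  rw [@isCompact_iff_ultrafilter_le_nhds X (patchTop X)]
  intro 𝒰 _
  -- the index of quasicompact opens not in the ultrafilter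
  let ι := {U : Set X // (IsOpen U ∧ IsCompact U) ∧ U ∉ 𝒰}
  let C : Set X := ⋂ i : ι, (i.1 : Set X)ᶜ
  have hCclosed : IsClosed C := isClosed_iInter fun i => i.2.1.1.isClosed_compl
  have hmeet : ∀ U : Set X, IsOpen U → IsCompact U → U ∈ 𝒰 → (U ∩ C).Nonempty := by
    intro U hUo hUc hU𝒰
    apply hUc.inter_iInter_nonempty (fun i : ι => (i.1 : Set X)ᶜ)
      (fun i => i.2.1.1.isClosed_compl)
    intro u
    have hmem : U ∩ ⋂ i ∈ u, (i.1 : Set X)ᶜ ∈ 𝒰 :=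
      inter_mem hU𝒰 ((biInter_mem u.finite_toSet).mpr fun i _ =>
        (Ultrafilter.compl_mem_iff_notMem).mpr i.2.2)
    exact Ultrafilter.nonempty_of_mem hmem
  have hCsub : ∀ U : Set X, IsOpen U → IsCompact U → U ∉ 𝒰 → C ⊆ Uᶜ := by
    intro U hUo hUc hU
    exact iInter_subset (fun i : ι => (i.1 : Set X)ᶜ) ⟨U, ⟨hUo, hUc⟩, hU⟩
  have hCne : C.Nonempty := by
    obtain ⟨x, -, hx⟩ := hmeet univ isOpen_univ isCompact_univ univ_mem
    exact ⟨x, hx⟩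
  have hirr : IsIrreducible C := by
    refine ⟨hCne, fun u v hu hv hCu hCv => ?_⟩
    obtain ⟨z1, hz1C, hz1u⟩ := hCu
    obtain ⟨z2, hz2C, hz2v⟩ := hCv
    obtain ⟨W1, hW1B, hz1W1, hW1u⟩ := hB.exists_subset_of_mem_open hz1u hu
    obtain ⟨W2, hW2B, hz2W2, hW2v⟩ := hB.exists_subset_of_mem_open hz2v hv
    have hW1𝒰 : W1 ∈ 𝒰 := by
      by_contra h
      exact (hCsub W1 (hB.isOpen hW1B) (hBc W1 hW1B) h hz1C) hz1W1
    have hW2𝒰 : W2 ∈ 𝒰 := by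
      by_contra h
      exact (hCsub W2 (hB.isOpen hW2B) (hBc W2 hW2B) h hz2C) hz2W2
    have hW12 : W1 ∩ W2 ∈ B := hBi W1 hW1B W2 hW2B
    obtain ⟨t, htW, htC⟩ := hmeet (W1 ∩ W2) (hB.isOpen hW12) (hBc _ hW12)
      (inter_mem hW1𝒰 hW2𝒰)
    exact ⟨t, htC, hW1u htW.1, hW2v htW.2⟩
  obtain ⟨z, hz⟩ := hsober.sober hirr hCclosed
  have hzC : z ∈ C := by
    rw [← hz]
    exact subset_closure rfl
  refine ⟨z, trivial, ?_⟩
  rw [patch_nhds]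
  refine le_iInf fun s => le_iInf fun hs => ?_
  rw [Filter.le_principal_iff]
  obtain ⟨hzs, hsg⟩ := hs
  rcases hsg with ⟨hso, hsc⟩ | ⟨U, ⟨hUo, hUc⟩, rfl⟩
  · by_contra h
    exact (hCsub s hso hsc h hzC) hzs
  · by_contra h
    have hU𝒰 : U ∈ 𝒰 := by
      by_contra hU
      exact h ((Ultrafilter.compl_mem_iff_notMem).mpr hU)
    obtain ⟨t, htU, htC⟩ := hmeet U hUo hUc hU𝒰
    have htcl : t ∈ closure ({z} : Set X) := by rw [hz]; exact htC
    exact hzs (specializes_mem_open hUo htcl htU)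

lemma patch_t2 (hX : IsSpectralSpace X) : @T2Space X (patchTop X) := by
  obtain ⟨-, ht0, -, B, hB, hBc, -⟩ := hX
  refine @T2Space.mk X (patchTop X) fun x y hxy => ?_
  obtain ⟨U, hUo, hxor⟩ := ((t0Space_iff_exists_isOpen_xor'_mem X).mp ht0) hxy
  rcases hxor with ⟨hxU, hyU⟩ | ⟨hyU, hxU⟩
  · obtain ⟨W, hWB, hxW, hWU⟩ := hB.exists_subset_of_mem_open hxU hUo
    exact ⟨W, Wᶜ, patch_isOpen (hB.isOpen hWB) (hBc W hWB),
      (patch_isClosed (hB.isOpen hWB) (hBc W hWB)).isOpen_compl, hxW,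
      fun h => hyU (hWU h), disjoint_compl_right⟩
  · obtain ⟨W, hWB, hyW, hWU⟩ := hB.exists_subset_of_mem_open hyU hUo
    exact ⟨Wᶜ, W, (patch_isClosed (hB.isOpen hWB) (hBc W hWB)).isOpen_compl,
      patch_isOpen (hB.isOpen hWB) (hBc W hWB),
      fun h => hxU (hWU h), hyW, disjoint_compl_left⟩

lemma patch_continuous {Y : Type*} [tY : TopologicalSpace Y] {f : X → Y}
    (hf : IsSpectralMap f) : Continuous[patchTop X, patchTop Y] f := by
  show Continuous[patchTop X, TopologicalSpace.generateFrom (patchGens Y)] f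
  rw [continuous_generateFrom_iff]
  rintro s (⟨hso, hsc⟩ | ⟨U, ⟨hUo, hUc⟩, rfl⟩)
  · exact patch_isOpen (hso.preimage hf.continuous)
      (hf.isCompact_preimage_of_isOpen hso hsc)
  · rw [Set.preimage_compl]
    exact (patch_isClosed (hUo.preimage hf.continuous)
      (hf.isCompact_preimage_of_isOpen hUo hUc)).isOpen_compl

end PatchAux

/-- The product of two patch topologies. -/
def patchProd2 (S' St : Type u) [TopologicalSpace S'] [TopologicalSpace St] :
    TopologicalSpace (S' × St) :=
  @instTopologicalSpaceProd _ _ (patchTop S') (patchTop St)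

/-- The product of four patch topologies. -/
def patchProd4 (S' St : Type u) [TopologicalSpace S'] [TopologicalSpace St] :
    TopologicalSpace ((S' × St) × (S' × St)) :=
  @instTopologicalSpaceProd _ _ (patchProd2 S' St) (patchProd2 S' St)

lemma prod_topology_mono {A B : Type*} (t1 t2 : TopologicalSpace A)
    (s1 s2 : TopologicalSpace B) (h1 : t1 ≤ t2) (h2 : s1 ≤ s2) :
    (@instTopologicalSpaceProd A B t1 s1) ≤ (@instTopologicalSpaceProd A B t2 s2) :=
  inf_le_inf (induced_mono h1) (induced_mono h2)

/-- A compact topology can be transported to a subobject with closed range. -/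
lemma compactSpace_induced {X P : Type*} (e : X → P) (τP : TopologicalSpace P)
    (hP : @CompactSpace P τP) (hcl : @IsClosed P τP (Set.range e)) :
    @CompactSpace X (τP.induced e) := by
  letI := τP
  letI τX : TopologicalSpace X := τP.induced e
  have he : Topology.IsInducing e := ⟨rfl⟩
  constructor
  rw [he.isCompact_iff, Set.image_univ]
  exact hcl.isCompact

lemma prod_closed_aux {A B : Type*} (tA : TopologicalSpace A) (tB : TopologicalSpace B)
    {s : Set A} {t : Set B} (hs : @IsClosed A tA s) (ht : @IsClosed B tB t) :
    @IsClosed (A × B) (@instTopologicalSpaceProd A B tA tB) (s ×ˢ t) := by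
  letI := tA; letI := tB
  exact hs.prod ht

lemma isClosed_preimage_induced {X P : Type*} (e : X → P) (τP : TopologicalSpace P)
    {s : Set P} (hs : @IsClosed P τP s) : @IsClosed X (τP.induced e) (e ⁻¹' s) := by
  letI := τP
  letI : TopologicalSpace X := τP.induced e
  exact hs.preimage continuous_induced_dom

lemma closed_cond_aux {S' S St : Type*} (t1 : TopologicalSpace S') (t2 : TopologicalSpace St)
    (t3 : TopologicalSpace S) (ht3 : @T2Space S t3) (ht2 : @T2Space St t2)
    {f : S' → S} {p : St → S} (hf : Continuous[t1, t3] f) (hp : Continuous[t2, t3] p) :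
    @IsClosed _ (@instTopologicalSpaceProd _ _ (@instTopologicalSpaceProd _ _ t1 t2)
        (@instTopologicalSpaceProd _ _ t1 t2))
      {r : (S' × St) × (S' × St) | f r.1.1 = p r.1.2 ∧ f r.2.1 = p r.2.2 ∧ r.1.2 = r.2.2} := by
  letI := t1; letI := t2; letI := t3
  haveI := ht3; haveI := ht2
  have h1 : IsClosed {r : (S' × St) × (S' × St) | f r.1.1 = p r.1.2} :=
    isClosed_eq (hf.comp (continuous_fst.comp continuous_fst))
      (hp.comp (continuous_snd.comp continuous_fst))
  have h2 : IsClosed {r : (S' × St) × (S' × St) | f r.2.1 = p r.2.2} :=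
    isClosed_eq (hf.comp (continuous_fst.comp continuous_snd))
      (hp.comp (continuous_snd.comp continuous_snd))
  have h3 : IsClosed {r : (S' × St) × (S' × St) | r.1.2 = r.2.2} :=
    isClosed_eq (continuous_snd.comp continuous_fst) (continuous_snd.comp continuous_snd)
  have heq : {r : (S' × St) × (S' × St) |
      f r.1.1 = p r.1.2 ∧ f r.2.1 = p r.2.2 ∧ r.1.2 = r.2.2} =
      {r : (S' × St) × (S' × St) | f r.1.1 = p r.1.2} ∩
        ({r : (S' × St) × (S' × St) | f r.2.1 = p r.2.2} ∩
          {r : (S' × St) × (S' × St) | r.1.2 = r.2.2}) := by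
    ext r
    simp only [Set.mem_setOf_eq, Set.mem_inter_iff]
  rw [heq]
  exact h1.inter (h2.inter h3)

/-- The key descent lemma: if `q : X → Y` is surjective and generalizing, `Y` has a
topological basis `B`, and there is a compact topology `τ` on `X` finer than the given one in
which the preimage of every basic open is closed, then any `A ⊆ Y` with open preimage is
open. -/
lemma key_open {X Y : Type*} [tX : TopologicalSpace X] [tY : TopologicalSpace Y]
    {q : X → Y} (hqs : Function.Surjective q) (hqg : IsGeneralizing q)
    {B : Set (Set Y)} (hB : TopologicalSpace.IsTopologicalBasis B)
    {A : Set Y} (hA : IsOpen (q ⁻¹' A))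
    (τ : TopologicalSpace X) (hfine : τ ≤ tX) (hcomp : @CompactSpace X τ)
    (hcl : ∀ U ∈ B, @IsClosed X τ (q ⁻¹' U)) : IsOpen A := by
  rw [← isClosed_compl_iff, ← closure_subset_iff_isClosed]
  intro y hy
  by_contra hyA
  rw [Set.notMem_compl_iff] at hyA
  -- the directed family of closed subsets of `X`
  let ι := {U : Set Y // U ∈ B ∧ y ∈ U}
  have hne : Nonempty ι := by
    obtain ⟨U, hUB, hyU, -⟩ := hB.exists_subset_of_mem_open (Set.mem_univ y) isOpen_univ
    exact ⟨⟨U, hUB, hyU⟩⟩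
  have htn : ∀ i : ι, (q ⁻¹' (Aᶜ ∩ i.1)).Nonempty := by
    intro i
    obtain ⟨b, hb1, hb2⟩ := mem_closure_iff.mp hy i.1 (hB.isOpen i.2.1) i.2.2
    obtain ⟨x, rfl⟩ := hqs b
    exact ⟨x, hb2, hb1⟩
  have hdir : Directed (· ⊇ ·) (fun i : ι => q ⁻¹' (Aᶜ ∩ i.1)) := by
    intro i j
    obtain ⟨W, hWB, hyW, hWsub⟩ := hB.exists_subset_of_mem_open
      (show y ∈ i.1 ∩ j.1 from ⟨i.2.2, j.2.2⟩)
      ((hB.isOpen i.2.1).inter (hB.isOpen j.2.1))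
    exact ⟨⟨W, hWB, hyW⟩, fun x hx => ⟨hx.1, (hWsub hx.2).1⟩,
      fun x hx => ⟨hx.1, (hWsub hx.2).2⟩⟩
  have hAo' : @IsOpen X τ (q ⁻¹' A) := (TopologicalSpace.le_def.mp hfine) _ hA
  have hAc : @IsClosed X τ ((q ⁻¹' A)ᶜ) := (@isClosed_compl_iff X τ (q ⁻¹' A)).mpr hAo'
  have hclosed : ∀ i : ι, @IsClosed X τ (q ⁻¹' (Aᶜ ∩ i.1)) := by
    intro i
    rw [Set.preimage_inter, Set.preimage_compl]
    exact hAc.inter (hcl i.1 i.2.1)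
  have hcompact : ∀ i : ι, @IsCompact X τ (q ⁻¹' (Aᶜ ∩ i.1)) := by
    intro i
    haveI := hcomp
    exact (hclosed i).isCompact
  obtain ⟨x, hx⟩ := @IsCompact.nonempty_iInter_of_directed_nonempty_isCompact_isClosed
    X τ ι hne (fun i => q ⁻¹' (Aᶜ ∩ i.1)) hdir htn hcompact hclosed
  rw [Set.mem_iInter] at hx
  -- `q x ∈ Aᶜ` and `y ∈ closure {q x}`
  have hbA : q x ∈ Aᶜ := (hx (Classical.choice hne)).1
  have hycl : y ∈ closure ({q x} : Set Y) := by
    rw [mem_closure_iff]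
    intro o ho hyo
    obtain ⟨W, hWB, hyW, hWo⟩ := hB.exists_subset_of_mem_open hyo ho
    exact ⟨q x, hWo (hx ⟨W, hWB, hyW⟩).2, rfl⟩
  -- use that `q` is generalizing to derive a contradiction
  obtain ⟨xy, rfl⟩ := hqs y
  obtain ⟨x', hx'cl, hx'⟩ := hqg xy (q x) hycl
  have hx'A : x' ∈ q ⁻¹' A := @specializes_mem_open X tX (q ⁻¹' A) hA xy x' hx'cl hyA
  rw [Set.mem_preimage, hx'] at hx'A
  exact hbA hx'A

/-- Let `f : S' → S` be a spectral map of spectral spaces and `p : S̃ → S` a surjective,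
spectral, generalizing map of spectral spaces. If the pullback
`f̃ : S' ×_S S̃ → S̃` of `f` along `p` is a local homeomorphism, then so is `f`. -/
theorem isLocalHomeomorph_of_isLocalHomeomorph_pullback
    {S' S St : Type u} [TopologicalSpace S'] [TopologicalSpace S] [TopologicalSpace St]
    (hS' : IsSpectralSpace S') (hS : IsSpectralSpace S) (hSt : IsSpectralSpace St)
    (f : S' → S) (hf : IsSpectralMap f)
    (p : St → S) (hp : IsSpectralMap p) (hps : Function.Surjective p)
    (hpg : IsGeneralizing p)
    (hlocal : IsLocalHomeomorph fun q : {q : S' × St // f q.1 = p q.2} => q.1.2) :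
    IsLocalHomeomorph f := by
  obtain ⟨BS', hBS', hBS'c, hBS'i⟩ := hS'.2.2.2
  obtain ⟨BS, hBS, hBSc, hBSi⟩ := hS.2.2.2
  -- Step 1: `f` is an open map.
  have hfopen : IsOpenMap f := by
    intro U hU
    have hpre : p ⁻¹' (f '' U) =
        (fun a : {q : S' × St // f q.1 = p q.2} => a.1.2) ''
          ((fun a : {q : S' × St // f q.1 = p q.2} => a.1.1) ⁻¹' U) := by
      ext y
      constructor
      · rintro ⟨x, hxU, hxy⟩
        exact ⟨⟨(x, y), hxy⟩, hxU, rfl⟩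
      · rintro ⟨a, haU, rfl⟩
        exact ⟨a.1.1, haU, a.2⟩
    have hOpen : IsOpen (p ⁻¹' (f '' U)) := by
      rw [hpre]
      exact hlocal.isOpenMap _ (hU.preimage (continuous_fst.comp continuous_subtype_val))
    exact key_open hps hpg hBS hOpen (patchTop St) (patch_le hSt) (patch_compactSpace hSt)
      (fun V hV => patch_isClosed ((hBS.isOpen hV).preimage hp.continuous)
        (hp.isCompact_preimage_of_isOpen (hBS.isOpen hV) (hBSc V hV)))
  -- The fibre products.
  let T := {z : S' × S' // f z.1 = f z.2}
  let Tt := {r : (S' × St) × (S' × St) //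
    f r.1.1 = p r.1.2 ∧ f r.2.1 = p r.2.2 ∧ r.1.2 = r.2.2}
  let qmap : Tt → T := fun r => ⟨(r.1.1.1, r.1.2.1), by
    rw [r.2.1, r.2.2.2]; exact r.2.2.1.symm⟩
  have hτ'le : (patchProd4 S' St).induced (Subtype.val : Tt → (S' × St) × (S' × St)) ≤
      (instTopologicalSpaceSubtype : TopologicalSpace Tt) :=
    induced_mono (prod_topology_mono _ _ _ _
      (prod_topology_mono _ _ _ _ (patch_le hS') (patch_le hSt))
      (prod_topology_mono _ _ _ _ (patch_le hS') (patch_le hSt)))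
  -- compactness of the induced patch topology on `Tt`
  have hτ'comp : @CompactSpace Tt
      ((patchProd4 S' St).induced (Subtype.val : Tt → (S' × St) × (S' × St))) := by
    apply compactSpace_induced
    · exact @instCompactSpaceProd _ _ (patchProd2 S' St) (patchProd2 S' St)
        (@instCompactSpaceProd _ _ (patchTop S') (patchTop St)
          (patch_compactSpace hS') (patch_compactSpace hSt))
        (@instCompactSpaceProd _ _ (patchTop S') (patchTop St)
          (patch_compactSpace hS') (patch_compactSpace hSt))
    · rw [Subtype.range_coe_subtype]
      exact closed_cond_aux (patchTop S') (patchTop St) (patchTop S)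
        (patch_t2 hS) (patch_t2 hSt) (patch_continuous hf) (patch_continuous hp)
  -- basis of `T`
  have hTbasis : TopologicalSpace.IsTopologicalBasis
      ((Set.preimage (Subtype.val : T → S' × S')) '' (Set.image2 (· ×ˢ ·) BS' BS')) :=
    TopologicalSpace.IsTopologicalBasis.isInducing Topology.IsEmbedding.subtypeVal.isInducing
      (hBS'.prod hBS')
  -- preimages of basic opens of `T` are closed in the induced patch topology
  have hclT : ∀ V ∈ (Set.preimage (Subtype.val : T → S' × S')) ''
      (Set.image2 (· ×ˢ ·) BS' BS'),
      @IsClosed Tt ((patchProd4 S' St).induced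
        (Subtype.val : Tt → (S' × St) × (S' × St))) (qmap ⁻¹' V) := by
    rintro - ⟨-, ⟨U, hU, V, hV, rfl⟩, rfl⟩
    have heq : qmap ⁻¹' ((Subtype.val : T → S' × S') ⁻¹' (U ×ˢ V)) =
        (Subtype.val : Tt → (S' × St) × (S' × St)) ⁻¹' ((U ×ˢ univ) ×ˢ (V ×ˢ univ)) := by
      ext r
      simp only [Set.mem_preimage, Set.mem_prod, Set.mem_univ, and_true]
      exact Iff.rfl
    rw [heq]
    exact isClosed_preimage_induced _ _
      (prod_closed_aux _ _
        (prod_closed_aux _ _ (patch_isClosed (hBS'.isOpen hU) (hBS'c U hU))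
          (@isClosed_univ _ (patchTop St)))
        (prod_closed_aux _ _ (patch_isClosed (hBS'.isOpen hV) (hBS'c V hV))
          (@isClosed_univ _ (patchTop St))))
  -- `qmap` is surjective
  have hqsurj : Function.Surjective qmap := by
    rintro ⟨⟨x1, x2⟩, hz⟩
    obtain ⟨y, hy⟩ := hps (f x1)
    exact ⟨⟨((x1, y), (x2, y)), hy.symm, by rw [← hz]; exact hy.symm, rfl⟩, rfl⟩
  -- `qmap` is generalizing
  have hqgen : IsGeneralizing qmap := by
    intro w z hwz
    rw [closure_subtype, Set.image_singleton] at hwz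
    rw [← Set.singleton_prod_singleton, closure_prod_eq] at hwz
    have hx1 : w.val.1.1 ∈ closure ({z.val.1} : Set S') := hwz.1
    have hx2 : w.val.2.1 ∈ closure ({z.val.2} : Set S') := hwz.2
    have hpy : p w.val.1.2 ∈ closure ({f z.val.1} : Set S) := by
      rw [← w.2.1]
      exact map_mem_closure hf.continuous hx1 (by simp)
    obtain ⟨y', hy'cl, hy'⟩ := hpg w.val.1.2 (f z.val.1) hpy
    refine ⟨⟨((z.val.1, y'), (z.val.2, y')), hy'.symm, by rw [← z.2]; exact hy'.symm, rfl⟩,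
      ?_, ?_⟩
    · rw [closure_subtype, Set.image_singleton]
      show w.val ∈ closure ({((z.val.1, y'), (z.val.2, y'))} :
        Set ((S' × St) × (S' × St)))
      rw [← Set.singleton_prod_singleton, closure_prod_eq, Set.mem_prod]
      constructor
      · rw [← Set.singleton_prod_singleton, closure_prod_eq]
        exact Set.mem_prod.mpr ⟨hx1, hy'cl⟩
      · rw [← Set.singleton_prod_singleton, closure_prod_eq]
        refine Set.mem_prod.mpr ⟨hx2, ?_⟩
        rw [← w.2.2.2]
        exact hy'cl
    · apply Subtype.ext
      show (z.val.1, z.val.2) = z.val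
      exact Prod.mk.eta
  -- the preimage of the diagonal of `T` is open
  have hqA : IsOpen (qmap ⁻¹' {z : T | z.val.1 = z.val.2}) := by
    rw [isOpen_iff_forall_mem_open]
    intro r hr
    obtain ⟨e, hre, hfe⟩ := hlocal ⟨r.val.1, r.2.1⟩
    refine ⟨{s : Tt | (⟨s.val.1, s.2.1⟩ : {q : S' × St // f q.1 = p q.2}) ∈ e.source ∧
      (⟨s.val.2, s.2.2.1⟩ : {q : S' × St // f q.1 = p q.2}) ∈ e.source}, ?_, ?_, ?_⟩
    · rintro s ⟨hs1, hs2⟩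
      have h12 : (⟨s.val.1, s.2.1⟩ : {q : S' × St // f q.1 = p q.2}) =
          ⟨s.val.2, s.2.2.1⟩ := by
        apply e.injOn hs1 hs2
        rw [← congrFun hfe, ← congrFun hfe]
        exact s.2.2.2
      show s.val.1.1 = s.val.2.1
      exact congrArg (fun a : {q : S' × St // f q.1 = p q.2} => a.val.1) h12
    · exact (e.open_source.preimage
        ((continuous_fst.comp continuous_subtype_val).subtype_mk _)).inter
        (e.open_source.preimage
          ((continuous_snd.comp continuous_subtype_val).subtype_mk _))
    · have hval : r.val.2 = r.val.1 := Prod.ext (show r.val.2.1 = r.val.1.1 from hr.symm)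
        r.2.2.2.symm
      refine ⟨hre, ?_⟩
      have hcast : (⟨r.val.2, r.2.2.1⟩ : {q : S' × St // f q.1 = p q.2}) =
          ⟨r.val.1, r.2.1⟩ := Subtype.ext hval
      rw [hcast]
      exact hre
  -- descend openness of the diagonal
  have hAopen : IsOpen {z : T | z.val.1 = z.val.2} :=
    key_open hqsurj hqgen hTbasis hqA _ hτ'le hτ'comp hclT
  -- conclude
  rw [isLocalHomeomorph_iff_isOpenEmbedding_restrict]
  intro x
  obtain ⟨O, hO, hAO⟩ := isOpen_induced_iff.mp hAopen
  have hxO : ((x, x) : S' × S') ∈ O := by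
    have hmem : (⟨(x, x), rfl⟩ : T) ∈ {z : T | z.val.1 = z.val.2} := rfl
    rw [← hAO] at hmem
    exact hmem
  obtain ⟨U1, U2, hU1, hU2, hxU1, hxU2, hU12⟩ := isOpen_prod_iff.mp hO x x hxO
  refine ⟨U1 ∩ U2, ((hU1.inter hU2).mem_nhds ⟨hxU1, hxU2⟩), ?_⟩
  have hinj : Set.InjOn f (U1 ∩ U2) := by
    intro a ha b hb hab
    have hmem : (⟨(a, b), hab⟩ : T) ∈ (Subtype.val : T → S' × S') ⁻¹' O :=
      hU12 (Set.mk_mem_prod ha.1 hb.2)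
    rw [hAO] at hmem
    exact hmem
  rw [isOpenEmbedding_iff_continuous_injective_isOpenMap]
  refine ⟨hf.continuous.comp continuous_subtype_val, ?_, ?_⟩
  · rintro ⟨a, ha⟩ ⟨b, hb⟩ hab
    exact Subtype.ext (hinj ha hb hab)
  · intro V hV
    have himg : (U1 ∩ U2).domRestrict f '' V = f '' (Subtype.val '' V) := by
      rw [Set.image_image]
      rfl
    rw [himg]
    exact hfopen _ ((hU1.inter hU2).isOpenMap_subtype_val V hV)
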